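/- Strong minimum principle: Let d ≥ 1, let F : ℝ^{2d} → ℝ be a weak averaging operator with ellipticity constant λ ∈ (0,1) and gauge functions η_1,…,η_{2d}, and let u : ℤ^d → ℝ be nonnegative and F-harmonic. If u(a) = 0 for some a ∈ ℤ^d, then u is identically 0 on ℤ^d. -/

import Mathlib

/-- The `2d` lattice directions on `ℤ^d`: for `j < d` this is the standard basis
vector `e_j`, and for `d ≤ j < 2d` it is `-e_{j-d}`. -/
def nbr (d : ℕ) (j : Fin (2 * d)) : Fin d → ℤ :=
  fun i => if (j : ℕ) = (i : ℕ) then 1 else if (j : ℕ) = (i : ℕ) + d then -1 else 0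

/-- `u : ℤ^d → ℝ` is `F`-harmonic if `u x = F (u (x+e_1), …, u (x+e_{2d}))` for all `x`. -/
def IsFHarmonic (d : ℕ) (F : (Fin (2 * d) → ℝ) → ℝ) (u : (Fin d → ℤ) → ℝ) : Prop :=
  ∀ x : Fin d → ℤ, u x = F fun j => u fun i => x i + nbr d j i

/-- A weak (isotropic) averaging operator with ellipticity constant `lam` and
gauge functions `η`. -/
structure IsWeakAvgOp (d : ℕ) (lam : ℝ) (η : Fin (2 * d) → ℝ → ℝ)
    (F : (Fin (2 * d) → ℝ) → ℝ) : Prop where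
  map_zero : F (fun _ => 0) = 0
  map_one : F (fun _ => 1) = 1
  continuous : Continuous F
  mono : ∀ (t : Fin (2 * d) → ℝ) (i : Fin (2 * d)) (s : ℝ),
    t i ≤ s → F t ≤ F (Function.update t i s)
  add_const : ∀ (t : Fin (2 * d) → ℝ) (c : ℝ), F (fun i => t i + c) = c + F t
  homog : ∀ (t : Fin (2 * d) → ℝ) (c : ℝ), F (fun i => c * t i) = c * F t
  perm : ∀ (t : Fin (2 * d) → ℝ) (σ : Equiv.Perm (Fin (2 * d))), F (t ∘ σ) = F t
  ellip : ∀ k : Fin (2 * d), lam ≤ F fun i => if i = k then 1 else 0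
  gauge_cont : ∀ i, ContinuousOn (η i) (Set.Ici 0)
  gauge_mono : ∀ i, MonotoneOn (η i) (Set.Ici 0)
  gauge_zero : ∀ i, η i 0 = 0
  gauge_nonneg : ∀ i s, 0 ≤ s → 0 ≤ η i s
  gauge_bound : ∀ (t : Fin (2 * d) → ℝ) (i : Fin (2 * d)) (s : ℝ),
    |F t - F (Function.update t i s)| ≤ η i |t i - s|

/-- Pointwise monotonicity of a weak averaging operator. -/
lemma Fmono {d : ℕ} {lam : ℝ} {η : Fin (2 * d) → ℝ → ℝ} {F : (Fin (2 * d) → ℝ) → ℝ}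
    (hF : IsWeakAvgOp d lam η F) {s t : Fin (2 * d) → ℝ} (h : ∀ i, s i ≤ t i) :
    F s ≤ F t := by
  have key : ∀ A : Finset (Fin (2 * d)),
      F s ≤ F (fun i => if i ∈ A then t i else s i) := by
    intro A
    induction A using Finset.induction with
    | empty => simp
    | @insert b B hb ih =>
      have heq : (fun i => if i ∈ insert b B then t i else s i)
          = Function.update (fun i => if i ∈ B then t i else s i) b (t b) := by
        funext i
        by_cases hib : i = b
        · subst hib; simp [Function.update]
        · simp [Function.update, hib]
      rw [heq]
      refine ih.trans (hF.mono _ b (t b) ?_)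
      simp only [hb, if_neg hb]
      exact h b
  have := key Finset.univ
  simpa using this

/-- One-step propagation of zeros. -/
lemma step_zero {d : ℕ} {lam : ℝ} (hlam0 : 0 < lam) {η : Fin (2 * d) → ℝ → ℝ}
    {F : (Fin (2 * d) → ℝ) → ℝ} (hF : IsWeakAvgOp d lam η F)
    {u : (Fin d → ℤ) → ℝ} (hu : ∀ x, 0 ≤ u x) (hharm : IsFHarmonic d F u)
    {x : Fin d → ℤ} (hx : u x = 0) (j : Fin (2 * d)) :
    u (fun i => x i + nbr d j i) = 0 := by
  set t : Fin (2 * d) → ℝ := fun k => u (fun i => x i + nbr d k i) with ht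
  have ht0 : ∀ k, 0 ≤ t k := fun k => hu _
  have hFt : F t = 0 := by rw [← hharm x, hx]
  have h1 : F (fun i => t j * (if i = j then 1 else 0)) ≤ F t := by
    refine Fmono hF fun i => ?_
    by_cases h : i = j
    · simp [h]
    · simpa [h] using ht0 i
  have h2 : F (fun i => t j * (if i = j then 1 else 0))
      = t j * F (fun i => if i = j then 1 else 0) := hF.homog _ _
  have h3 : lam * t j ≤ t j * F (fun i => if i = j then 1 else 0) := by
    have := hF.ellip j
    nlinarith [ht0 j]
  have : lam * t j ≤ 0 := by rw [← hFt]; linarith [h1, h2 ▸ h1]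
  have : t j = 0 := le_antisymm (by nlinarith [ht0 j]) (ht0 j)
  exact this

/-- Strong minimum principle: a nonnegative `F`-harmonic function vanishing at a
point vanishes identically. -/
theorem strong_minimum_principle (d : ℕ) (hd : 0 < d) (lam : ℝ) (hlam0 : 0 < lam)
    (hlam1 : lam < 1) (η : Fin (2 * d) → ℝ → ℝ) (F : (Fin (2 * d) → ℝ) → ℝ)
    (hF : IsWeakAvgOp d lam η F)
    (u : (Fin d → ℤ) → ℝ) (hu : ∀ x, 0 ≤ u x) (hharm : IsFHarmonic d F u)
    (a : Fin d → ℤ) (ha : u a = 0) :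
    ∀ x : Fin d → ℤ, u x = 0 := by
  have main : ∀ n : ℕ, ∀ x : Fin d → ℤ,
      (∑ i, (x i - a i).natAbs) ≤ n → u x = 0 := by
    intro n
    induction n with
    | zero =>
      intro x hx
      have hxa : x = a := by
        funext i
        have h0 : (x i - a i).natAbs ≤ ∑ k, (x k - a k).natAbs := by
          have := Finset.single_le_sum (f := fun k => (x k - a k).natAbs)
            (fun k _ => Nat.zero_le _) (Finset.mem_univ i)
          simpa using this
        omega
      rw [hxa]; exact ha
    | succ n ih =>
      intro x hx
      by_cases hle : ∑ i, (x i - a i).natAbs ≤ n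
      · exact ih x hle
      · have hne : ∃ i, x i ≠ a i := by
          by_contra hc
          push_neg at hc
          have : ∑ i, (x i - a i).natAbs = 0 :=
            Finset.sum_eq_zero fun i _ => by simp [hc i]
          omega
        obtain ⟨i, hi⟩ := hne
        rcases lt_or_gt_of_ne hi with h1 | h1
        · -- x i < a i : move up by e_i, use direction j = ⟨i + d⟩
          set x' : Fin d → ℤ := Function.update x i (x i + 1) with hx'
          have hsum : ∑ k, (x' k - a k).natAbs ≤ n := by
            have hx'sum : ∑ k, (x' k - a k).natAbs
                = (x' i - a i).natAbs + ∑ k ∈ Finset.univ.erase i, (x' k - a k).natAbs :=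
              (Finset.add_sum_erase _ _ (Finset.mem_univ i)).symm
            have hxsum : ∑ k, (x k - a k).natAbs
                = (x i - a i).natAbs + ∑ k ∈ Finset.univ.erase i, (x k - a k).natAbs :=
              (Finset.add_sum_erase _ _ (Finset.mem_univ i)).symm
            have herase : ∑ k ∈ Finset.univ.erase i, (x' k - a k).natAbs
                = ∑ k ∈ Finset.univ.erase i, (x k - a k).natAbs := by
              refine Finset.sum_congr rfl fun k hk => ?_
              have hki : k ≠ i := (Finset.mem_erase.mp hk).1
              simp [hx', Function.update_of_ne hki]
            have hi' : x' i = x i + 1 := by simp [hx']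
            rw [hx'sum, herase]
            rw [hxsum] at hx
            rw [hi']
            omega
          have hux' : u x' = 0 := ih x' hsum
          have hjlt : (i : ℕ) + d < 2 * d := by omega
          set j : Fin (2 * d) := ⟨(i : ℕ) + d, hjlt⟩ with hj
          have hxeq : (fun k => x' k + nbr d j k) = x := by
            funext k
            by_cases hk : k = i
            · subst hk
              simp [nbr, hj, hx', show (k : ℕ) + d ≠ (k : ℕ) by omega, hd.ne']
            · have hkv : (i : ℕ) ≠ (k : ℕ) := fun h => hk (Fin.ext h.symm)
              have h2 : (i : ℕ) + d ≠ (k : ℕ) := by have := k.isLt; omega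
              have h3 : (i : ℕ) + d ≠ (k : ℕ) + d := by omega
              simp [nbr, hj, hx', Function.update_of_ne hk, hkv, h2, h3]
          have := step_zero hlam0 hF hu hharm hux' j
          rwa [hxeq] at this
        · -- x i > a i : move down by e_i, use direction j = ⟨i⟩
          set x' : Fin d → ℤ := Function.update x i (x i - 1) with hx'
          have hsum : ∑ k, (x' k - a k).natAbs ≤ n := by
            have hx'sum : ∑ k, (x' k - a k).natAbs
                = (x' i - a i).natAbs + ∑ k ∈ Finset.univ.erase i, (x' k - a k).natAbs :=
              (Finset.add_sum_erase _ _ (Finset.mem_univ i)).symm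
            have hxsum : ∑ k, (x k - a k).natAbs
                = (x i - a i).natAbs + ∑ k ∈ Finset.univ.erase i, (x k - a k).natAbs :=
              (Finset.add_sum_erase _ _ (Finset.mem_univ i)).symm
            have herase : ∑ k ∈ Finset.univ.erase i, (x' k - a k).natAbs
                = ∑ k ∈ Finset.univ.erase i, (x k - a k).natAbs := by
              refine Finset.sum_congr rfl fun k hk => ?_
              have hki : k ≠ i := (Finset.mem_erase.mp hk).1
              simp [hx', Function.update_of_ne hki]
            have hi' : x' i = x i - 1 := by simp [hx']
            rw [hx'sum, herase]
            rw [hxsum] at hx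
            rw [hi']
            omega
          have hux' : u x' = 0 := ih x' hsum
          have hjlt : (i : ℕ) < 2 * d := by have := i.isLt; omega
          set j : Fin (2 * d) := ⟨(i : ℕ), hjlt⟩ with hj
          have hxeq : (fun k => x' k + nbr d j k) = x := by
            funext k
            by_cases hk : k = i
            · subst hk
              simp [nbr, hj, hx']
            · have hkv : (i : ℕ) ≠ (k : ℕ) := fun h => hk (Fin.ext h.symm)
              have h3 : (i : ℕ) ≠ (k : ℕ) + d := by have := i.isLt; have := k.isLt; omega
              simp [nbr, hj, hx', Function.update_of_ne hk, hkv, h3]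
          have := step_zero hlam0 hF hu hharm hux' j
          rwa [hxeq] at this
  intro x
  exact main (∑ i, (x i - a i).natAbs) x le_rfl
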